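/- Let G be a clock-free graph and let P be an induced path in G with an end a, where y is the neighbour of a in P. Let x and v be neighbours of a not in P such that {x, y, v} is a stable (independent) set. Then at least one of x and v has no neighbour in P \ {a}. -/

import Mathlib

open SimpleGraph

variable {V : Type*}

/-- A hole (induced cycle on at least 4 vertices) given as an embedding of the cycle `ZMod n`. -/
def IsHoleEmb (G : SimpleGraph V) (n : ℕ) (f : ZMod n → V) : Prop :=
  4 ≤ n ∧ Function.Injective f ∧
    ∀ i j, G.Adj (f i) (f j) ↔ (i = j + 1 ∨ j = i + 1)

/-- `G` contains a clock: a hole `C` together with a vertex not in `C` having two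
non-adjacent neighbours in `C`. -/
def ContainsClock (G : SimpleGraph V) : Prop :=
  ∃ (n : ℕ) (f : ZMod n → V) (v : V),
    IsHoleEmb G n f ∧ (∀ i, v ≠ f i) ∧
      ∃ i j, G.Adj v (f i) ∧ G.Adj v (f j) ∧ f i ≠ f j ∧ ¬ G.Adj (f i) (f j)

def ClockFree (G : SimpleGraph V) : Prop := ¬ ContainsClock G

/-- `G` has no induced diamond (`K₄` minus an edge). -/
def DiamondFree (G : SimpleGraph V) : Prop :=
  ¬ ∃ a b c d : V, a ≠ b ∧ a ≠ c ∧ a ≠ d ∧ b ≠ c ∧ b ≠ d ∧ c ≠ d ∧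
    G.Adj a b ∧ G.Adj a c ∧ G.Adj a d ∧ G.Adj b c ∧ G.Adj b d ∧ ¬ G.Adj c d

/-- `X` is a cutset of `G`: removing `X` leaves a non-empty disconnected graph. -/
def IsCutset (G : SimpleGraph V) (X : Set V) : Prop :=
  (Xᶜ : Set V).Nonempty ∧ ¬ (G.induce (Xᶜ : Set V)).Connected

def HasStarCutset (G : SimpleGraph V) : Prop :=
  ∃ X : Set V, IsCutset G X ∧ ∃ x ∈ X, ∀ y ∈ X, y = x ∨ G.Adj x y

def HasCliqueCutset (G : SimpleGraph V) : Prop :=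
  ∃ X : Set V, IsCutset G X ∧ G.IsClique X

/-- `X` separates `Y` from `Z`: every path with one end in `Y` and the other in `Z`
contains a vertex of `X`. -/
def Separates (G : SimpleGraph V) (X Y Z : Set V) : Prop :=
  ∀ y ∈ Y, ∀ z ∈ Z, ∀ p : G.Walk y z, p.IsPath → ∃ x ∈ X, x ∈ p.support

def IsClawCenter (G : SimpleGraph V) (v : V) : Prop :=
  ∃ x y z, G.Adj v x ∧ G.Adj v y ∧ G.Adj v z ∧ x ≠ y ∧ x ≠ z ∧ y ≠ z ∧
    ¬ G.Adj x y ∧ ¬ G.Adj x z ∧ ¬ G.Adj y z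

/-- An induced path on `n+1` vertices given as a function from `Fin (n+1)`. -/
def IsPathEmb (G : SimpleGraph V) (n : ℕ) (f : Fin (n+1) → V) : Prop :=
  Function.Injective f ∧
    ∀ i j, G.Adj (f i) (f j) ↔ ((i : ℕ) + 1 = (j : ℕ) ∨ (j : ℕ) + 1 = (i : ℕ))

/-- Cross conditions between two paths of a pyramid sharing only the apex (index 0):
off-apex parts are disjoint and the only possible edge joins the two far ends. -/
def PyrNoCross (G : SimpleGraph V) {n m : ℕ} (f : Fin (n+1) → V) (g : Fin (m+1) → V) : Prop :=
  ∀ i j, i ≠ 0 → j ≠ 0 →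
    f i ≠ g j ∧ (G.Adj (f i) (g j) → i = Fin.last n ∧ j = Fin.last m)

/-- Cross conditions between two paths of a theta: the interiors are disjoint and
anticomplete. -/
def ThetaNoCross (G : SimpleGraph V) {n m : ℕ} (f : Fin (n+1) → V) (g : Fin (m+1) → V) : Prop :=
  ∀ i j, i ≠ 0 → i ≠ Fin.last n → j ≠ 0 → j ≠ Fin.last m →
    f i ≠ g j ∧ ¬ G.Adj (f i) (g j)

/-- Cross conditions between two paths of a prism: they are disjoint and the only
edges join the two first ends or the two last ends. -/
def PrismNoCross (G : SimpleGraph V) {n m : ℕ} (f : Fin (n+1) → V) (g : Fin (m+1) → V) : Prop :=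
  ∀ i j, f i ≠ g j ∧
    (G.Adj (f i) (g j) → (i = 0 ∧ j = 0) ∨ (i = Fin.last n ∧ j = Fin.last m))

/-- A pyramid with apex `a`, given by three induced paths from `a` to a triangle. -/
def PyramidSpec (G : SimpleGraph V) (a : V) (n₁ n₂ n₃ : ℕ)
    (f₁ : Fin (n₁+1) → V) (f₂ : Fin (n₂+1) → V) (f₃ : Fin (n₃+1) → V) : Prop :=
  IsPathEmb G n₁ f₁ ∧ IsPathEmb G n₂ f₂ ∧ IsPathEmb G n₃ f₃ ∧
  f₁ 0 = a ∧ f₂ 0 = a ∧ f₃ 0 = a ∧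
  1 ≤ n₁ ∧ 1 ≤ n₂ ∧ 1 ≤ n₃ ∧
  G.Adj (f₁ (Fin.last n₁)) (f₂ (Fin.last n₂)) ∧
  G.Adj (f₂ (Fin.last n₂)) (f₃ (Fin.last n₃)) ∧
  G.Adj (f₁ (Fin.last n₁)) (f₃ (Fin.last n₃)) ∧
  ¬(n₁ = 1 ∧ n₂ = 1) ∧ ¬(n₁ = 1 ∧ n₃ = 1) ∧ ¬(n₂ = 1 ∧ n₃ = 1) ∧
  PyrNoCross G f₁ f₂ ∧ PyrNoCross G f₁ f₃ ∧ PyrNoCross G f₂ f₃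

def IsPyramidWithApex (G : SimpleGraph V) (Q : Set V) (a : V) : Prop :=
  ∃ (n₁ n₂ n₃ : ℕ) (f₁ : Fin (n₁+1) → V) (f₂ : Fin (n₂+1) → V) (f₃ : Fin (n₃+1) → V),
    PyramidSpec G a n₁ n₂ n₃ f₁ f₂ f₃ ∧
    Q = Set.range f₁ ∪ Set.range f₂ ∪ Set.range f₃

/-- A short pyramid: a pyramid one of whose paths has length exactly one. -/
def IsShortPyramidWithApex (G : SimpleGraph V) (Q : Set V) (a : V) : Prop :=
  ∃ (n₁ n₂ n₃ : ℕ) (f₁ : Fin (n₁+1) → V) (f₂ : Fin (n₂+1) → V) (f₃ : Fin (n₃+1) → V),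
    PyramidSpec G a n₁ n₂ n₃ f₁ f₂ f₃ ∧ (n₁ = 1 ∨ n₂ = 1 ∨ n₃ = 1) ∧
    Q = Set.range f₁ ∪ Set.range f₂ ∪ Set.range f₃

/-- A theta with ends `a, b`, given by three induced paths from `a` to `b` with
pairwise disjoint, pairwise anticomplete interiors. -/
def ThetaSpec (G : SimpleGraph V) (a b : V) (n₁ n₂ n₃ : ℕ)
    (f₁ : Fin (n₁+1) → V) (f₂ : Fin (n₂+1) → V) (f₃ : Fin (n₃+1) → V) : Prop :=
  IsPathEmb G n₁ f₁ ∧ IsPathEmb G n₂ f₂ ∧ IsPathEmb G n₃ f₃ ∧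
  f₁ 0 = a ∧ f₂ 0 = a ∧ f₃ 0 = a ∧
  f₁ (Fin.last n₁) = b ∧ f₂ (Fin.last n₂) = b ∧ f₃ (Fin.last n₃) = b ∧
  1 ≤ n₁ ∧ 1 ≤ n₂ ∧ 1 ≤ n₃ ∧ a ≠ b ∧ ¬ G.Adj a b ∧
  ThetaNoCross G f₁ f₂ ∧ ThetaNoCross G f₁ f₃ ∧ ThetaNoCross G f₂ f₃

def IsThetaWithEnds (G : SimpleGraph V) (Q : Set V) (a b : V) : Prop :=
  ∃ (n₁ n₂ n₃ : ℕ) (f₁ : Fin (n₁+1) → V) (f₂ : Fin (n₂+1) → V) (f₃ : Fin (n₃+1) → V),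
    ThetaSpec G a b n₁ n₂ n₃ f₁ f₂ f₃ ∧
    Q = Set.range f₁ ∪ Set.range f₂ ∪ Set.range f₃

/-- A prism: two disjoint triangles joined by three disjoint induced paths with
no other edges between them. -/
def IsPrismOn (G : SimpleGraph V) (Q : Set V) : Prop :=
  ∃ (n₁ n₂ n₃ : ℕ) (f₁ : Fin (n₁+1) → V) (f₂ : Fin (n₂+1) → V) (f₃ : Fin (n₃+1) → V),
    IsPathEmb G n₁ f₁ ∧ IsPathEmb G n₂ f₂ ∧ IsPathEmb G n₃ f₃ ∧
    1 ≤ n₁ ∧ 1 ≤ n₂ ∧ 1 ≤ n₃ ∧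
    G.Adj (f₁ 0) (f₂ 0) ∧ G.Adj (f₂ 0) (f₃ 0) ∧ G.Adj (f₁ 0) (f₃ 0) ∧
    G.Adj (f₁ (Fin.last n₁)) (f₂ (Fin.last n₂)) ∧
    G.Adj (f₂ (Fin.last n₂)) (f₃ (Fin.last n₃)) ∧
    G.Adj (f₁ (Fin.last n₁)) (f₃ (Fin.last n₃)) ∧
    PrismNoCross G f₁ f₂ ∧ PrismNoCross G f₁ f₃ ∧ PrismNoCross G f₂ f₃ ∧
    Q = Set.range f₁ ∪ Set.range f₂ ∪ Set.range f₃

/-- A three-path configuration: a theta, a prism, or a pyramid. -/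
def IsThreePathConfig (G : SimpleGraph V) (Q : Set V) : Prop :=
  (∃ a b, IsThetaWithEnds G Q a b) ∨ IsPrismOn G Q ∨ (∃ a, IsPyramidWithApex G Q a)

/-- `D` is a connected component of the induced subgraph `G[S]`. -/
def IsComponentOf (G : SimpleGraph V) (S D : Set V) : Prop :=
  D.Nonempty ∧ D ⊆ S ∧ (G.induce D).Connected ∧
    ∀ u ∈ D, ∀ v ∈ S, v ∉ D → ¬ G.Adj u v

/-- The weight of a set of vertices. -/
noncomputable def wSum [Fintype V] (w : V → ℝ) (S : Set V) : ℝ :=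
  ∑ v, S.indicator w v

/-- A weight function: values in `[0,1]` summing to `1`. -/
def IsWeightFun [Fintype V] (w : V → ℝ) : Prop :=
  (∀ v, 0 ≤ w v ∧ w v ≤ 1) ∧ ∑ v, w v = 1

/-- `X` is a `(w,c)`-balanced separator: every component of `G \ X` has weight at most `c`. -/
def IsBalancedSep [Fintype V] (G : SimpleGraph V) (w : V → ℝ) (c : ℝ) (X : Set V) : Prop :=
  ∀ D : Set V, IsComponentOf G (Xᶜ) D → wSum w D ≤ c

/-- `X` is a `(w,G)`-shield for `X'`, phrased via the heavy components `B`, `B'`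
of the canonical separations. -/
def IsShield [Fintype V] (G : SimpleGraph V) (w : V → ℝ) (X X' : Set V) : Prop :=
  ∃ B B' : Set V,
    IsComponentOf G (Xᶜ) B ∧ 1/2 < wSum w B ∧
    IsComponentOf G (X'ᶜ) B' ∧ 1/2 < wSum w B' ∧
    ((B ∪ X ⊂ B' ∪ X') ∨ (B ∪ X = B' ∪ X' ∧ B' ⊂ B))

/-- The central bag `β(G,w,𝒳)`: the intersection of the sets `B ∪ C` over canonical
separations `(A,C,B)` of members of `𝒳`. -/
def CentralBag [Fintype V] (G : SimpleGraph V) (w : V → ℝ) (𝓧 : Set (Set V)) : Set V :=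
  {v | ∀ X ∈ 𝓧, ∀ B : Set V, IsComponentOf G (Xᶜ) B → 1/2 < wSum w B → v ∈ B ∪ X}

/-- Two separations `(A,C,B)` and `(A',C',B')` are loosely non-crossing: no path has
one end in `A ∩ C'`, the other in `A' ∩ C`, and interior in `A ∩ A'`. -/
def LooselyNonCrossing (G : SimpleGraph V) (A C A' C' : Set V) : Prop :=
  ¬ ∃ (u v : V) (p : G.Walk u v), p.IsPath ∧ u ∈ A ∩ C' ∧ v ∈ A' ∩ C ∧
    ∀ x ∈ p.support, x ≠ u → x ≠ v → x ∈ A ∩ A'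

/-- `G` has a tree decomposition of width at most `r`. -/
def HasTreeDecompOfWidthLE (G : SimpleGraph V) (r : ℝ) : Prop :=
  ∃ (ι : Type) (T : SimpleGraph ι) (τ : ι → Set V),
    T.IsTree ∧
    (∀ v : V, ∃ t, v ∈ τ t) ∧
    (∀ u v : V, G.Adj u v → ∃ t, u ∈ τ t ∧ v ∈ τ t) ∧
    (∀ v : V, (T.induce {t | v ∈ τ t}).Connected) ∧
    (∀ t, ((τ t).ncard : ℝ) - 1 ≤ r)
lemma hole_helper (G : SimpleGraph V) (hG : ClockFree G)
    (n : ℕ) (f : Fin (n+1) → V) (hf : IsPathEmb G n f)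
    (u w : V) (huP : ∀ i, f i ≠ u) (hwP : ∀ i, f i ≠ w)
    (huw : u ≠ w)
    (hwa : G.Adj w (f 0))
    (k : ℕ) (hkn : k ≤ n) (hk2 : 2 ≤ k)
    (hua : G.Adj u (f 0))
    (hadj : G.Adj u (f ⟨k, by omega⟩))
    (hmin : ∀ t : ℕ, 1 ≤ t → t < k → ∀ ht : t < n+1, ¬ G.Adj u (f ⟨t, ht⟩))
    (m : ℕ) (hm2 : 2 ≤ m) (hmk : m ≤ k)
    (hwadj : G.Adj w (f ⟨m, by omega⟩)) : False := by
  haveI : NeZero (k + 2) := ⟨by omega⟩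
  haveI : Fact (1 < k + 2) := ⟨by omega⟩
  set g : ZMod (k+2) → V := fun i =>
    if h : i.val ≤ k then f ⟨i.val, by omega⟩ else u with hg
  have hval : ∀ i : ZMod (k+2), i.val < k + 2 := fun i => ZMod.val_lt i
  have hsucc : ∀ i : ZMod (k+2), (i + 1).val = (i.val + 1) % (k + 2) := by
    intro i
    rw [ZMod.val_add, ZMod.val_one]
  have heq : ∀ i j : ZMod (k+2), i = j ↔ i.val = j.val :=
    fun i j => ⟨fun h => h ▸ rfl, fun h => ZMod.val_injective _ h⟩
  -- values of g
  have hgle : ∀ (i : ZMod (k+2)) (h : i.val ≤ k), g i = f ⟨i.val, by omega⟩ := by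
    intro i h; simp [hg, h]
  have hggt : ∀ (i : ZMod (k+2)), ¬ i.val ≤ k → g i = u := by
    intro i h; simp [hg, h]
  -- adjacency of g with f-part
  have hadjf : ∀ (s t : ℕ) (hs : s ≤ k) (ht : t ≤ k),
      G.Adj (f ⟨s, by omega⟩) (f ⟨t, by omega⟩) ↔ (s + 1 = t ∨ t + 1 = s) := by
    intro s t hs ht
    exact hf.2 ⟨s, by omega⟩ ⟨t, by omega⟩
  -- adjacency of u with f-part (indices ≤ k)
  have hadju : ∀ (t : ℕ) (ht : t ≤ k),
      G.Adj u (f ⟨t, by omega⟩) ↔ (t = 0 ∨ t = k) := by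
    intro t ht
    constructor
    · intro h
      by_contra hc
      push_neg at hc
      exact hmin t (by omega) (by omega) (by omega) h
    · rintro (rfl | rfl)
      · convert hua using 2
        exact Fin.ext (by simp)
      · exact hadj
  have hhole : IsHoleEmb G (k+2) g := by
    refine ⟨by omega, ?_, ?_⟩
    · intro i j hij
      by_cases hi : i.val ≤ k <;> by_cases hj : j.val ≤ k
      · rw [hgle i hi, hgle j hj] at hij
        have := hf.1 hij
        rw [heq]
        simpa [Fin.ext_iff] using this
      · rw [hgle i hi, hggt j hj] at hij
        exact absurd hij (huP _)
      · rw [hggt i hi, hgle j hj] at hij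
        exact absurd hij.symm (huP _)
      · rw [heq]; have := hval i; have := hval j; omega
    · intro i j
      have hvi := hval i
      have hvj := hval j
      have hrhs : (i = j + 1 ∨ j = i + 1) ↔
          (i.val = (j.val + 1) % (k+2) ∨ j.val = (i.val + 1) % (k+2)) := by
        rw [heq i (j+1), heq j (i+1), hsucc, hsucc]
      rw [hrhs]
      by_cases hi : i.val ≤ k <;> by_cases hj : j.val ≤ k
      · rw [hgle i hi, hgle j hj, hadjf _ _ hi hj]
        have h1 : (j.val + 1) % (k+2) = j.val + 1 := Nat.mod_eq_of_lt (by omega)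
        have h2 : (i.val + 1) % (k+2) = i.val + 1 := Nat.mod_eq_of_lt (by omega)
        rw [h1, h2]; omega
      · have hj' : j.val = k + 1 := by omega
        rw [hgle i hi, hggt j hj]
        rw [show G.Adj (f ⟨i.val, by omega⟩) u ↔ G.Adj u (f ⟨i.val, by omega⟩) from
          ⟨fun h => h.symm, fun h => h.symm⟩, hadju _ hi]
        have h1 : (j.val + 1) % (k+2) = 0 := by rw [hj']; simp
        have h2 : (i.val + 1) % (k+2) = i.val + 1 := Nat.mod_eq_of_lt (by omega)
        rw [h1, h2]; omega
      · have hi' : i.val = k + 1 := by omega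
        rw [hggt i hi, hgle j hj, hadju _ hj]
        have h1 : (i.val + 1) % (k+2) = 0 := by rw [hi']; simp
        have h2 : (j.val + 1) % (k+2) = j.val + 1 := Nat.mod_eq_of_lt (by omega)
        rw [h1, h2]; omega
      · have : i = j := by rw [heq]; omega
        subst this
        rw [hggt i hi]
        simp only [G.irrefl, false_iff]
        have h2 : (i.val + 1) % (k+2) = 0 := by
          have : i.val = k + 1 := by omega
          rw [this]; simp
        omega
  apply hG
  refine ⟨k+2, g, w, hhole, ?_, ?_⟩
  · intro i
    by_cases hi : i.val ≤ k
    · rw [hgle i hi]; exact (hwP _).symm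
    · rw [hggt i hi]; exact huw.symm
  · have h0 : (0 : ZMod (k+2)).val = 0 := ZMod.val_zero
    have hmv : ((m : ℕ) : ZMod (k+2)).val = m := ZMod.val_cast_of_lt (by omega)
    have hg0 : g 0 = f ⟨0, by omega⟩ := by simp [hg, h0]
    have hgm : g ((m : ℕ) : ZMod (k+2)) = f ⟨m, by omega⟩ := by simp [hg, hmv, hmk]
    refine ⟨0, ((m : ℕ) : ZMod (k+2)), ?_, ?_, ?_, ?_⟩
    · rw [hg0]
      convert hwa using 2
      exact Fin.ext (by simp)
    · rw [hgm]; exact hwadj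
    · rw [hg0, hgm]
      intro hc
      have := hf.1 hc
      simp [Fin.ext_iff] at this
      omega
    · rw [hg0, hgm]
      intro hc
      have := (hf.2 _ _).1 hc
      simp at this
      omega

/-- Lemma 4.4: let `P` be an induced path with end `a` whose neighbour in `P` is `y`,
and let `x, v` be neighbours of `a` outside `P` with `{x,y,v}` stable. Then at least
one of `x` and `v` has no neighbour in `P \ {a}`. -/
theorem clockFree_claw_lemma (G : SimpleGraph V) (hG : ClockFree G)
    (n : ℕ) (hn : 1 ≤ n) (f : Fin (n+1) → V) (hf : IsPathEmb G n f)
    (a y x v : V) (ha : f 0 = a) (hy : f 1 = y)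
    (hax : G.Adj a x) (hav : G.Adj a v)
    (hxP : ∀ i, f i ≠ x) (hvP : ∀ i, f i ≠ v)
    (hxyne : x ≠ y) (hxvne : x ≠ v) (hvyne : v ≠ y)
    (hxy : ¬ G.Adj x y) (hxv : ¬ G.Adj x v) (hvy : ¬ G.Adj v y) :
    (∀ i, f i ≠ a → ¬ G.Adj x (f i)) ∨ (∀ i, f i ≠ a → ¬ G.Adj v (f i)) := by
  classical
  by_contra h
  push_neg at h
  obtain ⟨⟨i, hia, hxi⟩, ⟨j, hja, hvj⟩⟩ := h
  have h1v : ((1 : Fin (n+1)) : ℕ) = 1 := by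
    obtain ⟨n', rfl⟩ : ∃ n', n = n' + 1 := ⟨n - 1, by omega⟩
    exact Fin.val_one n'
  have key : ∀ (t : Fin (n+1)) (z : V), f t ≠ a → G.Adj z (f t) → ¬ G.Adj z y →
      2 ≤ (t:ℕ) := by
    intro t z hta hzt hzy
    by_contra hc
    push_neg at hc
    have h1 : (t:ℕ) = 0 ∨ (t:ℕ) = 1 := by omega
    rcases h1 with h1 | h1
    · refine hta ?_
      rw [← ha]
      congr 1
      exact Fin.ext (by simp [h1])
    · refine hzy ?_
      have : f t = y := by
        rw [← hy]
        congr 1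
        exact Fin.ext (show _ = ((1 : Fin (n+1)) : ℕ) from by rw [h1v]; omega)
      rwa [this] at hzt
  have hi2 : 2 ≤ (i:ℕ) := key i x hia hxi hxy
  have hj2 : 2 ≤ (j:ℕ) := key j v hja hvj hvy
  have hpx : ∃ t : ℕ, ∃ ht : t < n+1, 2 ≤ t ∧ G.Adj x (f ⟨t, ht⟩) :=
    ⟨i, i.isLt, hi2, hxi⟩
  have hpv : ∃ t : ℕ, ∃ ht : t < n+1, 2 ≤ t ∧ G.Adj v (f ⟨t, ht⟩) :=
    ⟨j, j.isLt, hj2, hvj⟩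
  obtain ⟨hkxlt, hkx2, hkxadj⟩ := Nat.find_spec hpx
  obtain ⟨hkvlt, hkv2, hkvadj⟩ := Nat.find_spec hpv
  have hminx : ∀ t : ℕ, 1 ≤ t → t < Nat.find hpx → ∀ ht : t < n+1,
      ¬ G.Adj x (f ⟨t, ht⟩) := by
    intro t h1 hlt ht hadj
    rcases Nat.eq_or_lt_of_le h1 with h1' | h1'
    · apply hxy
      have hft : f ⟨t, ht⟩ = y := by
        rw [← hy]; congr 1; exact Fin.ext (show t = ((1 : Fin (n+1)) : ℕ) from by rw [h1v]; omega)
      rwa [hft] at hadj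
    · exact Nat.find_min hpx hlt ⟨ht, by omega, hadj⟩
  have hminv : ∀ t : ℕ, 1 ≤ t → t < Nat.find hpv → ∀ ht : t < n+1,
      ¬ G.Adj v (f ⟨t, ht⟩) := by
    intro t h1 hlt ht hadj
    rcases Nat.eq_or_lt_of_le h1 with h1' | h1'
    · apply hvy
      have hft : f ⟨t, ht⟩ = y := by
        rw [← hy]; congr 1; exact Fin.ext (show t = ((1 : Fin (n+1)) : ℕ) from by rw [h1v]; omega)
      rwa [hft] at hadj
    · exact Nat.find_min hpv hlt ⟨ht, by omega, hadj⟩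
  have hxa : G.Adj x (f 0) := by rw [ha]; exact hax.symm
  have hva : G.Adj v (f 0) := by rw [ha]; exact hav.symm
  rcases le_total (Nat.find hpx) (Nat.find hpv) with hle | hle
  · exact hole_helper G hG n f hf v x hvP hxP hxvne.symm hxa (Nat.find hpv)
      (by omega) hkv2 hva hkvadj hminv (Nat.find hpx) hkx2 hle hkxadj
  · exact hole_helper G hG n f hf x v hxP hvP hxvne hva (Nat.find hpx)
      (by omega) hkx2 hxa hkxadj hminx (Nat.find hpv) hkv2 hle hkvadj
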